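/- Let A be a finite-dimensional symmetric algebra over a field and N > 2. Then the N-singularity category D^s_N(A) is weakly (−2, N)-Calabi-Yau: the N-th power of the Serre functor [−1]∘ν_A is isomorphic to Σ^{−2}, where Σ is the suspension of D^s_N(A). -/

import Mathlib

open CategoryTheory

universe v u

/-- The `m`-th iterate of an endofunctor. -/
def CategoryTheory.Functor.iter {T : Type u} [Category.{v} T] (F : T ⥤ T) : ℕ → (T ⥤ T)
  | 0 => 𝟭 T
  | (m + 1) => Functor.iter F m ⋙ F

noncomputable def iter_iso_shift {T : Type u} [Category.{v} T] [HasShift T ℤ]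
    (nu : T ≌ T) (hnu : nu.functor ≅ 𝟭 T) (m : ℕ) :
    (nu.functor ⋙ shiftFunctor T (-1 : ℤ)).iter m ≅ shiftFunctor T (-(m : ℤ)) := by
  induction m with
  | zero => exact (shiftFunctorZero T ℤ).symm
  | succ m ih =>
      calc (nu.functor ⋙ shiftFunctor T (-1 : ℤ)).iter (m + 1)
          = (nu.functor ⋙ shiftFunctor T (-1 : ℤ)).iter m ⋙
              (nu.functor ⋙ shiftFunctor T (-1 : ℤ)) := rfl
        _ ≅ shiftFunctor T (-(m : ℤ)) ⋙ (nu.functor ⋙ shiftFunctor T (-1 : ℤ)) :=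
            Functor.isoWhiskerRight ih _
        _ ≅ shiftFunctor T (-(m : ℤ)) ⋙ (𝟭 T ⋙ shiftFunctor T (-1 : ℤ)) :=
            Functor.isoWhiskerLeft _ (Functor.isoWhiskerRight hnu _)
        _ ≅ shiftFunctor T (-(m : ℤ)) ⋙ shiftFunctor T (-1 : ℤ) :=
            Functor.isoWhiskerLeft _ (Functor.leftUnitor _)
        _ ≅ shiftFunctor T (-((m : ℤ) + 1)) := by
            refine (shiftFunctorAdd' T (-(m : ℤ)) (-1) (-((m : ℤ) + 1)) (by ring)).symm
        _ = shiftFunctor T (-((m + 1 : ℕ) : ℤ)) := by push_cast; rfl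

/-- Let `A` be a finite-dimensional symmetric algebra over a field and
`N > 2`.  Then the `N`-singularity category `D^s_N(A)` is weakly `(−2, N)`-Calabi–Yau:
the `N`-th power of the Serre functor `[−1] ∘ ν_A` is isomorphic to `Σ^{−2}`, where `Σ`
is the suspension of `D^s_N(A)`.

Here `T` stands for `D^s_N(A)`, which carries a shift by `ℤ` (the shift `[1]` of
`N`-complexes), a suspension `Σ` (the triangulated suspension, an autoequivalence
satisfying `Σ² ≅ [N]`), and the Nakayama functor `ν` which, since `A` is symmetric, is
isomorphic to the identity; `[−1] ∘ ν` is a Serre functor on `T`. -/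
theorem singularity_category_symmetric_calabi_yau
    {T : Type u} [Category.{v} T] [HasShift T ℤ]
    (N : ℕ) (hN : 2 < N)
    (Sus : T ≌ T)
    (hSus : Sus.functor ⋙ Sus.functor ≅ shiftFunctor T (N : ℤ))
    (nu : T ≌ T)
    (hnu : nu.functor ≅ 𝟭 T) :
    Nonempty
      ((nu.functor ⋙ shiftFunctor T (-1 : ℤ)).iter N ≅ Sus.inverse ⋙ Sus.inverse) := by
  have key : Sus.inverse ⋙ Sus.inverse ≅ shiftFunctor T (-(N : ℤ)) := by
    calc Sus.inverse ⋙ Sus.inverse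
        ≅ (Sus.inverse ⋙ Sus.inverse) ⋙ 𝟭 T := (Functor.rightUnitor _).symm
      _ ≅ (Sus.inverse ⋙ Sus.inverse) ⋙
            (shiftFunctor T (N : ℤ) ⋙ shiftFunctor T (-(N : ℤ))) :=
          Functor.isoWhiskerLeft _ (shiftFunctorCompIsoId T (N : ℤ) (-(N : ℤ)) (by ring)).symm
      _ ≅ ((Sus.inverse ⋙ Sus.inverse) ⋙ shiftFunctor T (N : ℤ)) ⋙
            shiftFunctor T (-(N : ℤ)) := (Functor.associator _ _ _).symm
      _ ≅ ((Sus.inverse ⋙ Sus.inverse) ⋙ (Sus.functor ⋙ Sus.functor)) ⋙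
            shiftFunctor T (-(N : ℤ)) :=
          Functor.isoWhiskerRight (Functor.isoWhiskerLeft _ hSus.symm) _
      _ ≅ (Sus.inverse ⋙ ((Sus.inverse ⋙ Sus.functor) ⋙ Sus.functor)) ⋙
            shiftFunctor T (-(N : ℤ)) := Iso.refl _
      _ ≅ (Sus.inverse ⋙ (𝟭 T ⋙ Sus.functor)) ⋙ shiftFunctor T (-(N : ℤ)) :=
          Functor.isoWhiskerRight (Functor.isoWhiskerLeft _ (Functor.isoWhiskerRight Sus.counitIso _)) _
      _ ≅ (Sus.inverse ⋙ Sus.functor) ⋙ shiftFunctor T (-(N : ℤ)) :=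
          Functor.isoWhiskerRight (Functor.isoWhiskerLeft _ (Functor.leftUnitor _)) _
      _ ≅ 𝟭 T ⋙ shiftFunctor T (-(N : ℤ)) :=
          Functor.isoWhiskerRight Sus.counitIso _
      _ ≅ shiftFunctor T (-(N : ℤ)) := Functor.leftUnitor _
  exact ⟨iter_iso_shift nu hnu N ≪≫ key.symm⟩
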